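/- If G is a maximal outerplanar graph of order n with 5 ≤ n ≤ 8, then for every vertex i of G the two-element set {i, (i+4) mod n} is a disjunctive dominating set of G; in particular γ₂ᵈ(G) ≤ 2. -/

import Mathlib

open SimpleGraph

/-- `G` is (the representation of) a maximal outerplanar graph on the convex polygon
`0, 1, …, n-1`: it contains all outer edges `{i, (i+1) mod n}`, no two of its edges
cross, and it has exactly `2n - 3` edges. -/
def IsMop {n : ℕ} [NeZero n] (G : SimpleGraph (Fin n)) : Prop :=
  (∀ i : Fin n, G.Adj i (i + 1)) ∧
  (∀ a b c d : Fin n, a < b → b < c → c < d → G.Adj a c → ¬ G.Adj b d) ∧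
  G.edgeSet.ncard = 2 * n - 3

/-- An edge of `G` that is not an outer edge of the polygon. -/
def IsDiagonal {n : ℕ} [NeZero n] (G : SimpleGraph (Fin n)) (u v : Fin n) : Prop :=
  G.Adj u v ∧ v ≠ u + 1 ∧ u ≠ v + 1

/-- Three pairwise adjacent vertices all of whose connecting edges are diagonals. -/
def IsInternalTriangle {n : ℕ} [NeZero n] (G : SimpleGraph (Fin n)) (a b c : Fin n) : Prop :=
  IsDiagonal G a b ∧ IsDiagonal G b c ∧ IsDiagonal G a c

/-- The number of vertices of `G` having degree `2`. -/
noncomputable def degTwoCount {n : ℕ} (G : SimpleGraph (Fin n)) : ℕ :=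
  {v : Fin n | (G.neighborSet v).ncard = 2}.ncard

/-- `D` is a dominating set of `G`. -/
def IsDomSet {V : Type*} (G : SimpleGraph V) (D : Set V) : Prop :=
  ∀ v ∉ D, ∃ u ∈ D, G.Adj u v

/-- `D` is a disjunctive dominating set (2DD-set) of `G`: every vertex outside `D`
has a neighbor in `D` or at least two vertices of `D` at distance exactly `2`. -/
def IsDisjDomSet {V : Type*} (G : SimpleGraph V) (D : Set V) : Prop :=
  ∀ v ∉ D, (∃ u ∈ D, G.Adj u v) ∨
    ∃ u ∈ D, ∃ w ∈ D, u ≠ w ∧ G.dist u v = 2 ∧ G.dist w v = 2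

/-- The domination number `γ(G)`. -/
noncomputable def domNum {V : Type*} [Fintype V] (G : SimpleGraph V) : ℕ :=
  sInf {k : ℕ | ∃ D : Set V, IsDomSet G D ∧ D.ncard = k}

/-- The disjunctive domination number `γ₂ᵈ(G)`. -/
noncomputable def disjDomNum {V : Type*} [Fintype V] (G : SimpleGraph V) : ℕ :=
  sInf {k : ℕ | ∃ D : Set V, IsDisjDomSet G D ∧ D.ncard = k}

lemma dist_two' {V : Type*} {G : SimpleGraph V} {a b c : V} (hab : G.Adj a b) (hbc : G.Adj b c)
    (hac : a ≠ c) (hnac : ¬ G.Adj a c) : G.dist a c = 2 := by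
  have hle : G.dist a c ≤ 2 := by
    simpa using SimpleGraph.dist_le (Walk.cons hab hbc.toWalk)
  have h0 : G.dist a c ≠ 0 := by
    intro h
    rcases SimpleGraph.dist_eq_zero_iff_eq_or_not_reachable.mp h with h' | h'
    · exact hac h'
    · exact h' ⟨Walk.cons hab hbc.toWalk⟩
  have h1 : G.dist a c ≠ 1 := fun h => hnac (SimpleGraph.dist_eq_one_iff_adj.mp h)
  omega

lemma cover2 {V : Type*} {G : SimpleGraph V} {i j v b c : V}
    (hib : G.Adj i b) (hbv : G.Adj b v) (hjc : G.Adj j c) (hcv : G.Adj c v)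
    (hiv : i ≠ v) (hjv : j ≠ v) (hij : i ≠ j) :
    (∃ u ∈ ({i, j} : Set V), G.Adj u v) ∨
      ∃ u ∈ ({i, j} : Set V), ∃ w ∈ ({i, j} : Set V),
        u ≠ w ∧ G.dist u v = 2 ∧ G.dist w v = 2 := by
  by_cases hA : G.Adj i v
  · exact Or.inl ⟨i, by simp, hA⟩
  by_cases hB : G.Adj j v
  · exact Or.inl ⟨j, by simp, hB⟩
  exact Or.inr ⟨i, by simp, j, by simp, hij,
    dist_two' hib hbv hiv hA, dist_two' hjc hcv hjv hB⟩

section Cases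
set_option linter.unnecessarySimpa false

lemma key5 (G : SimpleGraph (Fin 5)) (h1 : ∀ i : Fin 5, G.Adj i (i + 1)) :
    ∀ i : Fin 5, IsDisjDomSet G {i, i + 4} := by
  intro i v hv
  obtain ⟨j, rfl⟩ : ∃ j, v = i + j := ⟨v - i, by abel⟩
  simp only [Set.mem_insert_iff, Set.mem_singleton_iff, not_or] at hv
  obtain ⟨hv1, hv2⟩ := hv
  have hj0 : j ≠ 0 := fun h => hv1 (by simp [h])
  have hj4 : j ≠ 4 := fun h => hv2 (by simp [h])
  have hA' : ∀ a b : Fin 5, a + 1 = b → G.Adj (i + a) (i + b) := by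
    intro a b hb
    subst hb
    have := h1 (i + a)
    rwa [add_assoc] at this
  have hne : ∀ a b : Fin 5, a ≠ b → (i + a) ≠ (i + b) :=
    fun a b h hc => h (add_left_cancel hc)
  have hcase := (by decide : ∀ j : Fin 5, j ≠ 0 → j ≠ 4 →
    (j = 1 ∨ j = 2 ∨ j = 3)) j hj0 hj4
  rcases hcase with rfl | rfl | rfl
  · exact Or.inl ⟨i, by simp, by simpa using hA' 0 1 (by decide)⟩
  · exact cover2 (by simpa using hA' 0 1 (by decide)) (hA' 1 2 (by decide))
      ((hA' 3 4 (by decide)).symm) ((hA' 2 3 (by decide)).symm)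
      (by simpa using hne 0 2 (by decide)) (hne 4 2 (by decide))
      (by simpa using hne 0 4 (by decide))
  · exact Or.inl ⟨i + 4, by simp, (hA' 3 4 (by decide)).symm⟩

lemma key6 (G : SimpleGraph (Fin 6)) (h1 : ∀ i : Fin 6, G.Adj i (i + 1)) :
    ∀ i : Fin 6, IsDisjDomSet G {i, i + 4} := by
  intro i v hv
  obtain ⟨j, rfl⟩ : ∃ j, v = i + j := ⟨v - i, by abel⟩
  simp only [Set.mem_insert_iff, Set.mem_singleton_iff, not_or] at hv
  obtain ⟨hv1, hv2⟩ := hv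
  have hj0 : j ≠ 0 := fun h => hv1 (by simp [h])
  have hj4 : j ≠ 4 := fun h => hv2 (by simp [h])
  have hA' : ∀ a b : Fin 6, a + 1 = b → G.Adj (i + a) (i + b) := by
    intro a b hb
    subst hb
    have := h1 (i + a)
    rwa [add_assoc] at this
  have hne : ∀ a b : Fin 6, a ≠ b → (i + a) ≠ (i + b) :=
    fun a b h hc => h (add_left_cancel hc)
  have hcase := (by decide : ∀ j : Fin 6, j ≠ 0 → j ≠ 4 →
    (j = 1 ∨ j = 2 ∨ j = 3 ∨ j = 5)) j hj0 hj4
  rcases hcase with rfl | rfl | rfl | rfl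
  · exact Or.inl ⟨i, by simp, by simpa using hA' 0 1 (by decide)⟩
  · exact cover2 (by simpa using hA' 0 1 (by decide)) (hA' 1 2 (by decide))
      ((hA' 3 4 (by decide)).symm) ((hA' 2 3 (by decide)).symm)
      (by simpa using hne 0 2 (by decide)) (hne 4 2 (by decide))
      (by simpa using hne 0 4 (by decide))
  · exact Or.inl ⟨i + 4, by simp, (hA' 3 4 (by decide)).symm⟩
  · exact Or.inl ⟨i + 4, by simp, hA' 4 5 (by decide)⟩

lemma key7 (G : SimpleGraph (Fin 7)) (h1 : ∀ i : Fin 7, G.Adj i (i + 1)) :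
    ∀ i : Fin 7, IsDisjDomSet G {i, i + 4} := by
  intro i v hv
  obtain ⟨j, rfl⟩ : ∃ j, v = i + j := ⟨v - i, by abel⟩
  simp only [Set.mem_insert_iff, Set.mem_singleton_iff, not_or] at hv
  obtain ⟨hv1, hv2⟩ := hv
  have hj0 : j ≠ 0 := fun h => hv1 (by simp [h])
  have hj4 : j ≠ 4 := fun h => hv2 (by simp [h])
  have hA' : ∀ a b : Fin 7, a + 1 = b → G.Adj (i + a) (i + b) := by
    intro a b hb
    subst hb
    have := h1 (i + a)
    rwa [add_assoc] at this
  have hne : ∀ a b : Fin 7, a ≠ b → (i + a) ≠ (i + b) :=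
    fun a b h hc => h (add_left_cancel hc)
  have hcase := (by decide : ∀ j : Fin 7, j ≠ 0 → j ≠ 4 →
    (j = 1 ∨ j = 2 ∨ j = 3 ∨ j = 5 ∨ j = 6)) j hj0 hj4
  rcases hcase with rfl | rfl | rfl | rfl | rfl
  · exact Or.inl ⟨i, by simp, by simpa using hA' 0 1 (by decide)⟩
  · exact cover2 (by simpa using hA' 0 1 (by decide)) (hA' 1 2 (by decide))
      ((hA' 3 4 (by decide)).symm) ((hA' 2 3 (by decide)).symm)
      (by simpa using hne 0 2 (by decide)) (hne 4 2 (by decide))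
      (by simpa using hne 0 4 (by decide))
  · exact Or.inl ⟨i + 4, by simp, (hA' 3 4 (by decide)).symm⟩
  · exact Or.inl ⟨i + 4, by simp, hA' 4 5 (by decide)⟩
  · exact Or.inl ⟨i, by simp, by simpa using (hA' 6 0 (by decide)).symm⟩

lemma key8 (G : SimpleGraph (Fin 8)) (h1 : ∀ i : Fin 8, G.Adj i (i + 1)) :
    ∀ i : Fin 8, IsDisjDomSet G {i, i + 4} := by
  intro i v hv
  obtain ⟨j, rfl⟩ : ∃ j, v = i + j := ⟨v - i, by abel⟩
  simp only [Set.mem_insert_iff, Set.mem_singleton_iff, not_or] at hv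
  obtain ⟨hv1, hv2⟩ := hv
  have hj0 : j ≠ 0 := fun h => hv1 (by simp [h])
  have hj4 : j ≠ 4 := fun h => hv2 (by simp [h])
  have hA' : ∀ a b : Fin 8, a + 1 = b → G.Adj (i + a) (i + b) := by
    intro a b hb
    subst hb
    have := h1 (i + a)
    rwa [add_assoc] at this
  have hne : ∀ a b : Fin 8, a ≠ b → (i + a) ≠ (i + b) :=
    fun a b h hc => h (add_left_cancel hc)
  have hcase := (by decide : ∀ j : Fin 8, j ≠ 0 → j ≠ 4 →
    (j = 1 ∨ j = 2 ∨ j = 3 ∨ j = 5 ∨ j = 6 ∨ j = 7)) j hj0 hj4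
  rcases hcase with rfl | rfl | rfl | rfl | rfl | rfl
  · exact Or.inl ⟨i, by simp, by simpa using hA' 0 1 (by decide)⟩
  · exact cover2 (by simpa using hA' 0 1 (by decide)) (hA' 1 2 (by decide))
      ((hA' 3 4 (by decide)).symm) ((hA' 2 3 (by decide)).symm)
      (by simpa using hne 0 2 (by decide)) (hne 4 2 (by decide))
      (by simpa using hne 0 4 (by decide))
  · exact Or.inl ⟨i + 4, by simp, (hA' 3 4 (by decide)).symm⟩
  · exact Or.inl ⟨i + 4, by simp, hA' 4 5 (by decide)⟩
  · exact cover2 (by simpa using (hA' 7 0 (by decide)).symm) ((hA' 6 7 (by decide)).symm)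
      (hA' 4 5 (by decide)) (hA' 5 6 (by decide))
      (by simpa using hne 0 6 (by decide)) (hne 4 6 (by decide))
      (by simpa using hne 0 4 (by decide))
  · exact Or.inl ⟨i, by simp, by simpa using (hA' 7 0 (by decide)).symm⟩

end Cases

lemma h04_5 : (0 : Fin 5) ≠ 0 + 4 := by decide
lemma h04_6 : (0 : Fin 6) ≠ 0 + 4 := by decide
lemma h04_7 : (0 : Fin 7) ≠ 0 + 4 := by decide
lemma h04_8 : (0 : Fin 8) ≠ 0 + 4 := by decide

theorem mop_five_to_eight_disjDom {n : ℕ} [NeZero n] (G : SimpleGraph (Fin n))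
    (hn5 : 5 ≤ n) (hn8 : n ≤ 8) (hG : IsMop G) :
    (∀ i : Fin n, IsDisjDomSet G {i, i + 4}) ∧ disjDomNum G ≤ 2 := by
  obtain rfl | rfl | rfl | rfl : n = 5 ∨ n = 6 ∨ n = 7 ∨ n = 8 := by omega
  · exact ⟨key5 G hG.1, Nat.sInf_le ⟨{0, 0 + 4}, key5 G hG.1 0, Set.ncard_pair h04_5⟩⟩
  · exact ⟨key6 G hG.1, Nat.sInf_le ⟨{0, 0 + 4}, key6 G hG.1 0, Set.ncard_pair h04_6⟩⟩
  · exact ⟨key7 G hG.1, Nat.sInf_le ⟨{0, 0 + 4}, key7 G hG.1 0, Set.ncard_pair h04_7⟩⟩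
  · exact ⟨key8 G hG.1, Nat.sInf_le ⟨{0, 0 + 4}, key8 G hG.1 0, Set.ncard_pair h04_8⟩⟩
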